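/- arXiv:1810.07625 — 2 statements merged into one kernel-verified Lean document; each statement's English description precedes it below -/
import Mathlib

section
/- In the setting of a Weyl group W with root lattice Λ_r and a group A of diagram automorphisms, the root lattice of the folded reflection group W₁ = W^A acting on 𝔥₁* = (𝔥*)^A equals the intersection Λ_r ∩ 𝔥₁*. -/
open scoped RealInnerProductSpace Classical

/-- Let `W` be a finite Weyl group acting on `𝔥* = V` with simple roots `Δ` and root
lattice `Λr = ℤ-span(Δ)`, and let `A` be a group of diagram automorphisms (isometries
permuting `Δ`).  Then the root lattice of the folded reflection group `W₁ = Wᴬ` acting on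
`𝔥₁* = (𝔥*)ᴬ = V₁` — namely the `ℤ`-span of the folded simple roots, the sums of the
`A`-orbits on `Δ` — equals the intersection `Λr ∩ 𝔥₁*`. -/
theorem folded_root_lattice_eq_intersection
    {V : Type*} [NormedAddCommGroup V] [InnerProductSpace ℝ V] [FiniteDimensional ℝ V]
    (Δ : Finset V) (hΔ0 : (0 : V) ∉ Δ)
    (hind : LinearIndependent ℝ (fun α : Δ => (α : V)))
    (hcrys : ∀ α ∈ Δ, ∀ β ∈ Δ, ∃ m : ℤ, 2 * ⟪α, β⟫ / ⟪β, β⟫ = (m : ℝ))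
    (hobtuse : ∀ α ∈ Δ, ∀ β ∈ Δ, α ≠ β → ⟪α, β⟫ ≤ 0)
    (W : Subgroup (V ≃ₗᵢ[ℝ] V)) [Finite W]
    (hW : W = Subgroup.closure
      ((fun α : V => Submodule.reflection ((Submodule.span ℝ {α})ᗮ)) '' Δ))
    (A : Subgroup (V ≃ₗᵢ[ℝ] V))
    (hA : ∀ a ∈ A, (fun v : V => a v) '' Δ = Δ)
    (V₁ : Set V) (hV₁ : V₁ = {v : V | ∀ a ∈ A, a v = v})
    (Δ₁ : Finset V)
    (hΔ₁ : Δ₁ = Δ.image (fun α : V =>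
      ∑ β ∈ Δ.filter (fun β : V => ∃ a ∈ A, a α = β), β)) :
    ((Submodule.span ℤ (Δ₁ : Set V) : Submodule ℤ V) : Set V)
      = ((Submodule.span ℤ (Δ : Set V) : Submodule ℤ V) : Set V) ∩ V₁ := by
  classical
  subst hΔ₁ hV₁
  set g : V → V := fun α => ∑ β ∈ Δ.filter (fun β : V => ∃ a ∈ A, a α = β), β with hg
  -- basic facts about A acting on Δ
  have hmem : ∀ a ∈ A, ∀ β : V, β ∈ Δ → a β ∈ Δ := by
    intro a ha β hβ
    have h := hA a ha
    rw [← Finset.mem_coe, ← h]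
    exact Set.mem_image_of_mem _ (Finset.mem_coe.mpr hβ)
  have himΔ : ∀ a ∈ A, Δ.image (fun β => a β) = Δ := by
    intro a ha
    apply Finset.coe_injective
    rw [Finset.coe_image]
    exact hA a ha
  -- linear independence consequences
  have zer : ∀ d : V → ℝ, ∑ β ∈ Δ, d β • β = 0 → ∀ β ∈ Δ, d β = 0 := by
    intro d hd β hβ
    have h := Fintype.linearIndependent_iff.mp hind (fun i : Δ => d i)
    have hsum : ∑ i : Δ, d i • (i : V) = 0 := by
      rw [Finset.sum_coe_sort Δ (fun β => d β • β)]; exact hd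
    exact h hsum ⟨β, hβ⟩
  have uniq : ∀ d e : V → ℝ, ∑ β ∈ Δ, d β • β = ∑ β ∈ Δ, e β • β →
      ∀ β ∈ Δ, d β = e β := by
    intro d e h β hβ
    have h0 := zer (fun β => d β - e β) (by
      simp only [sub_smul]
      rw [Finset.sum_sub_distrib, h, sub_self]) β hβ
    have : d β - e β = 0 := h0
    linarith
  -- orbits
  have horb_self : ∀ α ∈ Δ, α ∈ Δ.filter (fun β : V => ∃ a ∈ A, a α = β) := by
    intro α hα
    exact Finset.mem_filter.mpr ⟨hα, 1, one_mem A, by simp⟩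
  have horb_inv : ∀ a ∈ A, ∀ α : V,
      Δ.filter (fun β : V => ∃ a' ∈ A, a' (a α) = β)
        = Δ.filter (fun β : V => ∃ a' ∈ A, a' α = β) := by
    intro a ha α
    apply Finset.filter_congr
    intro β _
    constructor
    · rintro ⟨a', ha', rfl⟩
      exact ⟨a' * a, mul_mem ha' ha, by
        simp [LinearIsometryEquiv.coe_mul, Function.comp]⟩
    · rintro ⟨a', ha', rfl⟩
      refine ⟨a' * a⁻¹, mul_mem ha' (inv_mem ha), ?_⟩
      simp [LinearIsometryEquiv.coe_mul, Function.comp]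
  have hginv : ∀ a ∈ A, ∀ α : V, g (a α) = g α := by
    intro a ha α
    simp only [hg]
    rw [horb_inv a ha α]
  have himage : ∀ a ∈ A, ∀ α : V,
      (Δ.filter (fun β : V => ∃ a' ∈ A, a' α = β)).image (fun β => a β)
        = Δ.filter (fun β : V => ∃ a' ∈ A, a' α = β) := by
    intro a ha α
    apply Finset.Subset.antisymm
    · intro β hβ
      obtain ⟨γ, hγ, rfl⟩ := Finset.mem_image.mp hβ
      obtain ⟨hγΔ, a', ha', hga⟩ := Finset.mem_filter.mp hγ
      refine Finset.mem_filter.mpr ⟨hmem a ha γ hγΔ, a * a', mul_mem ha ha', ?_⟩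
      rw [← hga]
      simp [LinearIsometryEquiv.coe_mul, Function.comp]
    · intro β hβ
      obtain ⟨hβΔ, a', ha', hga⟩ := Finset.mem_filter.mp hβ
      refine Finset.mem_image.mpr ⟨a⁻¹ β, ?_, by simp⟩
      refine Finset.mem_filter.mpr ⟨?_, a⁻¹ * a', mul_mem (inv_mem ha) ha', ?_⟩
      · have := hmem a⁻¹ (inv_mem ha) β hβΔ
        exact this
      · rw [← hga]
        simp [LinearIsometryEquiv.coe_mul, Function.comp]
  have gfix : ∀ α : V, ∀ a ∈ A, a (g α) = g α := by
    intro α a ha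
    simp only [hg]
    rw [map_sum]
    calc ∑ β ∈ Δ.filter (fun β : V => ∃ a' ∈ A, a' α = β), a β
        = ∑ β ∈ (Δ.filter (fun β : V => ∃ a' ∈ A, a' α = β)).image (fun β => a β), β := by
          rw [Finset.sum_image (fun x _ y _ h => a.injective h)]
      _ = ∑ β ∈ Δ.filter (fun β : V => ∃ a' ∈ A, a' α = β), β := by rw [himage a ha α]
  -- the two directions
  apply Set.Subset.antisymm
  · intro x hx
    have hx' : x ∈ Submodule.span ℤ (↑(Δ.image g) : Set V) := hx
    constructor
    · have hle : Submodule.span ℤ (↑(Δ.image g) : Set V) ≤ Submodule.span ℤ (Δ : Set V) := by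
        apply Submodule.span_le.mpr
        intro t ht
        obtain ⟨α, hα, rfl⟩ := Finset.mem_image.mp (Finset.mem_coe.mp ht)
        have : g α ∈ Submodule.span ℤ (Δ : Set V) := by
          simp only [hg]
          exact Submodule.sum_mem _ (fun β hβ =>
            Submodule.subset_span (Finset.mem_filter.mp hβ).1)
        exact this
      exact hle hx'
    · intro a ha
      have key : ∀ y ∈ Submodule.span ℤ (↑(Δ.image g) : Set V), a y = y := by
        intro y hy
        induction hy using Submodule.span_induction with
        | mem t ht =>
          obtain ⟨α, hα, rfl⟩ := Finset.mem_image.mp (Finset.mem_coe.mp ht)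
          exact gfix α a ha
        | zero => exact map_zero a
        | add u v _ _ hu hv => rw [map_add, hu, hv]
        | smul z u _ hu => rw [map_zsmul, hu]
      exact key x hx'
  · rintro x ⟨hx1, hx2⟩
    have hx1' : x ∈ Submodule.span ℤ (Δ : Set V) := hx1
    obtain ⟨c, -, hc⟩ := Submodule.mem_span_finset.mp hx1'
    -- coefficients are constant on orbits
    have hAc : ∀ a ∈ A, ∀ β ∈ Δ, c (a β) = c β := by
      intro a ha β hβ
      have key : ∑ γ ∈ Δ, c (a γ) • γ = x := by
        apply a.injective
        rw [map_sum]
        simp only [map_zsmul]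
        have him : ∑ γ ∈ Δ.image (fun β => a β), c γ • γ = ∑ γ ∈ Δ, c (a γ) • a γ :=
          Finset.sum_image (fun x _ y _ h => a.injective h)
        rw [← him, himΔ a ha, hc, hx2 a ha]
      have key2 : ∑ γ ∈ Δ, ((c (a γ) : ℝ)) • γ = ∑ γ ∈ Δ, ((c γ : ℝ)) • γ := by
        simp only [Int.cast_smul_eq_zsmul]
        rw [key, hc]
      exact_mod_cast uniq _ _ key2 β hβ
    -- fibers of g are orbits
    have hfiber : ∀ α ∈ Δ,
        Δ.filter (fun β => g β = g α) = Δ.filter (fun β : V => ∃ a ∈ A, a α = β) := by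
      intro α hα
      ext β
      simp only [Finset.mem_filter]
      constructor
      · rintro ⟨hβΔ, hgβ⟩
        have hsum : ∑ γ ∈ Δ,
            (((if γ ∈ Δ.filter (fun δ : V => ∃ a ∈ A, a β = δ) then (1:ℝ) else 0)
            - (if γ ∈ Δ.filter (fun δ : V => ∃ a ∈ A, a α = δ) then (1:ℝ) else 0)) • γ)
            = 0 := by
          simp only [sub_smul, ite_smul, one_smul, zero_smul]
          rw [Finset.sum_sub_distrib, Finset.sum_ite_mem, Finset.sum_ite_mem,
            Finset.inter_eq_right.mpr (Finset.filter_subset _ _),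
            Finset.inter_eq_right.mpr (Finset.filter_subset _ _)]
          have : g β - g α = 0 := by rw [hgβ, sub_self]
          simpa only [hg] using this
        have hz := zer _ hsum β hβΔ
        have hP : β ∈ Δ.filter (fun δ : V => ∃ a ∈ A, a β = δ) := horb_self β hβΔ
        rw [if_pos hP] at hz
        by_cases hQ : β ∈ Δ.filter (fun δ : V => ∃ a ∈ A, a α = δ)
        · exact ⟨hβΔ, (Finset.mem_filter.mp hQ).2⟩
        · rw [if_neg hQ] at hz; norm_num at hz
      · rintro ⟨hβΔ, a, ha, rfl⟩
        exact ⟨hβΔ, hginv a ha α⟩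
    -- conclude
    show x ∈ Submodule.span ℤ (↑(Δ.image g) : Set V)
    rw [← hc, ← Finset.sum_fiberwise_of_maps_to
      (fun β hβ => Finset.mem_image_of_mem g hβ) (fun β => c β • β)]
    apply Submodule.sum_mem
    intro t ht
    obtain ⟨α, hα, rfl⟩ := Finset.mem_image.mp ht
    rw [hfiber α hα]
    have heq : ∑ β ∈ Δ.filter (fun β : V => ∃ a ∈ A, a α = β), c β • β
        = c α • g α := by
      simp only [hg, Finset.smul_sum]
      apply Finset.sum_congr rfl
      intro β hβ
      obtain ⟨hβΔ, a, ha, rfl⟩ := Finset.mem_filter.mp hβ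
      rw [hAc a ha α hα]
    rw [heq]
    exact Submodule.smul_mem _ _
      (Submodule.subset_span (Finset.mem_coe.mpr (Finset.mem_image_of_mem g hα)))
end

section
/- Let R be a commutative ring, and let (M_k)_{k≥1} be an inverse system of R-modules with surjective-image stabilization: the decreasing sequence of images of M_k → M_1 stabilizes (the Mittag-Leffler condition holds for each level). If each M_k is obtained as M/hᵏM for a module M over R[[h]] complete and separated in the h-adic topology with each M/hᵏM finitely generated over R, and the images im(M_k → M_1) stabilize, then lim M_k is a finitely generated R[[h]]-module. -/
/-- Let `R` be a commutative ring and `M` a module over `R[[h]]` which is complete and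
separated in the `h`-adic topology (here `N k = hᵏM`, Cauchy sequences converge, and
`⋂ₖ hᵏM = 0`), with each quotient `M_k = M/hᵏM` finitely generated over `R`, and such that
the Mittag-Leffler condition holds for the inverse system `(M_k)` (for each level `k` the
decreasing sequence of images `im(M_j → M_k)`, `j ≥ k`, stabilizes).  Then
`lim M_k ≅ M` is a finitely generated `R[[h]]`-module. -/
theorem inverse_limit_finitely_generated_over_power_series
    {R : Type*} [CommRing R] {M : Type*} [AddCommGroup M]
    [Module (PowerSeries R) M] [Module R M]
    [IsScalarTower R (PowerSeries R) M]
    (N : ℕ → Submodule (PowerSeries R) M)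
    (hN : ∀ k, N k = Submodule.map
      (LinearMap.lsmul (PowerSeries R) M ((PowerSeries.X : PowerSeries R) ^ k)) ⊤)
    (hle : ∀ {j k : ℕ}, k ≤ j → N j ≤ N k)
    -- each `M/hᵏM` is finitely generated over `R`
    (hfgR : ∀ k, ∃ s : Finset M, ∀ x : M, ∃ c : s → R,
      x - ∑ i ∈ s.attach, c i • (i : M) ∈ N k)
    -- separatedness in the `h`-adic topology
    (hsep : ∀ x : M, (∀ k, x ∈ N k) → x = 0)
    -- completeness in the `h`-adic topology: Cauchy sequences converge
    (hcomplete : ∀ seq : ℕ → M, (∀ k, seq (k + 1) - seq k ∈ N k) →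
      ∃ x : M, ∀ k, x - seq k ∈ N k)
    -- Mittag-Leffler: for each `k`, the images of `M/hʲM → M/hᵏM`, `j ≥ k`, stabilize
    (hML : ∀ k, ∃ K, ∃ hK : k ≤ K, ∀ j, ∀ hj : K ≤ j,
      LinearMap.range (Submodule.mapQ (N j) (N k) LinearMap.id
          (fun _ hx => hle (hK.trans hj) hx)) =
        LinearMap.range (Submodule.mapQ (N K) (N k) LinearMap.id
          (fun _ hx => hle hK hx))) :
    Module.Finite (PowerSeries R) M := by
  classical
  obtain ⟨s, hs⟩ := hfgR 1
  -- one-step division: every element is an `R`-combination of `s` plus `X` times something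
  have key : ∀ z : M, ∃ cw : (s → R) × M,
      z - ∑ i ∈ s.attach, cw.1 i • (i : M) = (PowerSeries.X : PowerSeries R) • cw.2 := by
    intro z
    obtain ⟨c, hc⟩ := hs z
    rw [hN 1] at hc
    obtain ⟨w, -, hw⟩ := hc
    exact ⟨(c, w), by simpa using hw.symm⟩
  let g : M → (s → R) × M := fun z => (key z).choose
  have hg : ∀ z : M, z - ∑ i ∈ s.attach, (g z).1 i • (i : M)
      = (PowerSeries.X : PowerSeries R) • (g z).2 := fun z => (key z).choose_spec
  refine ⟨⟨s, ?_⟩⟩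
  rw [eq_top_iff]
  intro x _
  -- successive approximations
  let y : ℕ → M := fun n => Nat.rec x (fun _ prev => (g prev).2) n
  have hy0 : y 0 = x := rfl
  have hys : ∀ n, y (n + 1) = (g (y n)).2 := fun n => rfl
  let c : ℕ → s → R := fun n => (g (y n)).1
  let f : s → PowerSeries R := fun i => PowerSeries.mk (fun n => c n i)
  have hstep : ∀ n, y n = (PowerSeries.X : PowerSeries R) • y (n + 1)
      + ∑ i ∈ s.attach, c n i • (i : M) := by
    intro n
    have := hg (y n)
    rw [sub_eq_iff_eq_add] at this
    simpa [hys n] using this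
  have hRsmul : ∀ (r : R) (m : M), r • m = (PowerSeries.C (R := R) r) • m := by
    intro r m
    rw [← algebraMap_smul (PowerSeries R) r m, PowerSeries.algebraMap_apply]
    simp
  have claimA : ∀ k, x - ∑ i ∈ s.attach,
      (∑ n ∈ Finset.range k, PowerSeries.C (R := R) (c n i) * PowerSeries.X ^ n) • (i : M)
      = (PowerSeries.X : PowerSeries R) ^ k • y k := by
    intro k
    induction k with
    | zero => simp [hy0]
    | succ k ih =>
      have expand : (PowerSeries.X : PowerSeries R) ^ k • y k
          = (PowerSeries.X : PowerSeries R) ^ (k + 1) • y (k + 1)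
            + ∑ i ∈ s.attach, (PowerSeries.C (R := R) (c k i) * PowerSeries.X ^ k) • (i : M) := by
        rw [hstep k, smul_add, Finset.smul_sum, smul_smul, ← pow_succ]
        congr 1
        refine Finset.sum_congr rfl fun i _ => ?_
        rw [hRsmul (c k i), smul_smul, mul_comm]
      calc x - ∑ i ∈ s.attach,
            (∑ n ∈ Finset.range (k + 1), PowerSeries.C (R := R) (c n i) * PowerSeries.X ^ n) • (i : M)
          = (x - ∑ i ∈ s.attach,
              (∑ n ∈ Finset.range k, PowerSeries.C (R := R) (c n i) * PowerSeries.X ^ n) • (i : M))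
            - ∑ i ∈ s.attach, (PowerSeries.C (R := R) (c k i) * PowerSeries.X ^ k) • (i : M) := by
            simp only [Finset.sum_range_succ, add_smul, Finset.sum_add_distrib]
            abel
        _ = (PowerSeries.X : PowerSeries R) ^ (k + 1) • y (k + 1) := by
            rw [ih, expand]; abel
  have claimB : ∀ k (i : s), ∃ q : PowerSeries R,
      f i - ∑ n ∈ Finset.range k, PowerSeries.C (R := R) (c n i) * PowerSeries.X ^ n
        = PowerSeries.X ^ k * q := by
    intro k i
    have hdvd : (PowerSeries.X : PowerSeries R) ^ k ∣
        f i - ∑ n ∈ Finset.range k, PowerSeries.C (R := R) (c n i) * PowerSeries.X ^ n := by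
      rw [PowerSeries.X_pow_dvd_iff]
      intro m hm
      rw [map_sub, map_sum]
      have : ∀ n ∈ Finset.range k,
          (PowerSeries.coeff (R := R) m) (PowerSeries.C (R := R) (c n i) * PowerSeries.X ^ n)
            = if n = m then c n i else 0 := by
        intro n _
        rw [PowerSeries.coeff_C_mul, PowerSeries.coeff_X_pow]
        rcases eq_or_ne n m with h | h
        · subst h; simp
        · rw [if_neg (Ne.symm h), if_neg h, mul_zero]
      rw [Finset.sum_congr rfl this, Finset.sum_ite_eq' (Finset.range k) m (fun n => c n i),
        if_pos (Finset.mem_range.mpr hm)]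
      show (PowerSeries.coeff (R := R) m) (PowerSeries.mk fun n => c n i) - c m i = 0
      rw [PowerSeries.coeff_mk, sub_self]
    exact hdvd
  -- the limit lies in `N k` for every `k`
  have hxmem : ∀ k, x - ∑ i ∈ s.attach, f i • (i : M) ∈ N k := by
    intro k
    choose q hq using claimB k
    have : x - ∑ i ∈ s.attach, f i • (i : M)
        = (PowerSeries.X : PowerSeries R) ^ k • (y k - ∑ i ∈ s.attach, q i • (i : M)) := by
      rw [smul_sub, ← claimA k, Finset.smul_sum]
      have h1 : ∀ i ∈ s.attach, (PowerSeries.X : PowerSeries R) ^ k • (q i • (i : M))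
          = (f i - ∑ n ∈ Finset.range k, PowerSeries.C (R := R) (c n i) * PowerSeries.X ^ n)
            • (i : M) := by
        intro i _
        rw [smul_smul, ← hq i]
      rw [Finset.sum_congr rfl h1]
      simp only [sub_smul, Finset.sum_sub_distrib]
      abel
    rw [this, hN k]
    exact ⟨y k - ∑ i ∈ s.attach, q i • (i : M), trivial, rfl⟩
  have hx : x = ∑ i ∈ s.attach, f i • (i : M) :=
    sub_eq_zero.mp (hsep _ hxmem)
  rw [hx]
  exact Submodule.sum_smul_mem _ _ fun i _ => Submodule.subset_span i.2
end
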